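/- Let V be a finite-dimensional complex vector space with a bilinear form φ, and let a ⊆ End(V) be spanned by an sl₂-triple (h,e,f) acting on V, such that each element of the Lie algebra so/sp defined by φ satisfies φ(xv,w) + φ(v,xw) = 0 for all v,w; in particular assume φ(ev,w) + φ(v,ew) = 0. For s ≥ 1 let M_s = {v ∈ V : f·v = 0 and h·v = (-s+1)v} (the space of lowest weight vectors of the isotypic component of dimension s). Define ψ_s on M_s by ψ_s(v,w) = φ(v, e^{s-1}·w). If φ is symmetric, then ψ_s is symmetric when s is odd and alternating when s is even. -/

import Mathlib

attribute [local instance 100] LieRing.ofAssociativeRing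

/-- Let `(h,e,f)` be an `sl₂`-triple of endomorphisms of a
finite-dimensional complex vector space `V` lying in the Lie algebra defined by a
symmetric nondegenerate bilinear form `φ` (so `φ(xv,w) + φ(v,xw) = 0` for `x = h,e,f`).
For `s ≥ 1` let `M_s = {v : f·v = 0, h·v = (1-s)·v}` be the space of lowest weight
vectors of the `s`-dimensional isotypic component and define `ψ_s(v,w) = φ(v, e^{s-1}·w)`
on `M_s`.  Then `ψ_s` is symmetric when `s` is odd and alternating when `s` is even. -/
theorem stmt7 {V : Type*} [AddCommGroup V] [Module ℂ V] [FiniteDimensional ℂ V]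
    (h e f : Module.End ℂ V) (t : IsSl2Triple h e f)
    (φ : LinearMap.BilinForm ℂ V) (hsymm : ∀ v w : V, φ v w = φ w v)
    (hnd : φ.Nondegenerate)
    (hh : ∀ v w : V, φ (h v) w + φ v (h w) = 0)
    (he : ∀ v w : V, φ (e v) w + φ v (e w) = 0)
    (hf : ∀ v w : V, φ (f v) w + φ v (f w) = 0)
    (M : ℕ → Set V)
    (hM : ∀ s, M s = {v : V | f v = 0 ∧ h v = ((1 : ℂ) - (s : ℂ)) • v}) :
    ∀ s : ℕ, 1 ≤ s → ∀ v ∈ M s, ∀ w ∈ M s,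
      (Odd s → φ v ((e ^ (s - 1)) w) = φ w ((e ^ (s - 1)) v)) ∧
      (Even s → φ v ((e ^ (s - 1)) w) = - φ w ((e ^ (s - 1)) v)) := by
  have key : ∀ k : ℕ, ∀ v w : V, φ v ((e ^ k) w) = (-1 : ℂ) ^ k * φ ((e ^ k) v) w := by
    intro k
    induction k with
    | zero => intro v w; simp
    | succ n ih =>
      intro v w
      have h1 : (e ^ (n + 1)) w = (e ^ n) (e w) := by
        rw [pow_succ, Module.End.mul_apply]
      have h2 : (e ^ (n + 1)) v = e ((e ^ n) v) := by
        rw [pow_succ', Module.End.mul_apply]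
      rw [h1, ih v (e w), h2]
      have := he ((e ^ n) v) w
      have h3 : φ ((e ^ n) v) (e w) = - φ (e ((e ^ n) v)) w := by linear_combination this
      rw [h3]
      ring
  intro s hs v _ w _
  have base : φ v ((e ^ (s - 1)) w) = (-1 : ℂ) ^ (s - 1) * φ w ((e ^ (s - 1)) v) := by
    rw [key (s - 1) v w, hsymm ((e ^ (s - 1)) v) w, key (s - 1) w v]
  constructor
  · intro hodd
    obtain ⟨m, hm⟩ := hodd
    have : s - 1 = 2 * m := by omega
    rw [base, this]
    simp [pow_mul]
  · intro heven
    obtain ⟨m, hm⟩ := heven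
    have hm1 : s - 1 = 2 * (m - 1) + 1 := by omega
    rw [base, hm1]
    rw [pow_succ, pow_mul]
    simp
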